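/- arXiv:quant-ph/0302174 — 2 statements merged into one kernel-verified Lean document; each statement's English description precedes it below -/
import Mathlib

section
/- Let (A_j)_{j∈J} be Kraus operators of a memoryless quantum channel. If a quantum source (ρ_m)_{m≥1} is stationary and weakly mixing, then the transformed family (E^{⊗m}(ρ_m))_{m≥1} is weakly mixing. -/
open Matrix Finset Filter Topology
open scoped ComplexOrder

noncomputable section

/-- `Mat d m` is the algebra of operators on the `m`-fold tensor power of `ℂ^d`,
realized as matrices indexed by words `Fin m → Fin d`. -/
abbrev Mat (d m : ℕ) : Type := Matrix (Fin m → Fin d) (Fin m → Fin d) ℂ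

/-- Kronecker (tensor) product `A ⊗ B` of `A : Mat d m` and `B : Mat d i`. -/
def tens {d m i : ℕ} (A : Mat d m) (B : Mat d i) : Mat d (m + i) :=
  Matrix.of fun x y =>
    A (fun k => x (Fin.castAdd i k)) (fun k => y (Fin.castAdd i k)) *
    B (fun k => x (Fin.natAdd m k)) (fun k => y (Fin.natAdd m k))

/-- A quantum source: each `ρ m` (for `m ≥ 1`) is positive semidefinite with trace 1. -/
def IsQSource (d : ℕ) (ρ : ∀ m, Mat d m) : Prop :=
  ∀ m, 1 ≤ m → (ρ m).PosSemidef ∧ (ρ m).trace = 1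

/-- Consistency: `tr(ρ_m a) = tr(ρ_{m+i} (a ⊗ I^{⊗i}))`. -/
def QConsistent (d : ℕ) (ρ : ∀ m, Mat d m) : Prop :=
  ∀ m i, 1 ≤ m → 1 ≤ i → ∀ a : Mat d m,
    (ρ m * a).trace = (ρ (m + i) * tens a (1 : Mat d i)).trace

/-- Stationarity: `tr(ρ_m a) = tr(ρ_{i+m} (I^{⊗i} ⊗ a))`. -/
def QStationary (d : ℕ) (ρ : ∀ m, Mat d m) : Prop :=
  ∀ m i, 1 ≤ m → 1 ≤ i → ∀ a : Mat d m,
    (ρ m * a).trace = (ρ (i + m) * tens (1 : Mat d i) a).trace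

/-- Ergodicity: Cesàro averages of `tr(ρ_{m+i} (a ⊗ I^{⊗(i-m)} ⊗ b))` converge to
`tr(ρ_m a)·tr(ρ_m b)`. -/
def QErgodic (d : ℕ) (ρ : ∀ m, Mat d m) : Prop :=
  ∀ m, 1 ≤ m → ∀ a b : Mat d m,
    Tendsto (fun n : ℕ =>
        (n : ℂ)⁻¹ * ∑ i ∈ Finset.Icc m n,
          (ρ (m + (i - m) + m) * tens (tens a (1 : Mat d (i - m))) b).trace)
      atTop (nhds ((ρ m * a).trace * (ρ m * b).trace))

/-- Weak mixing. -/
def QWeakMixing (d : ℕ) (ρ : ∀ m, Mat d m) : Prop :=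
  ∀ m, 1 ≤ m → ∀ a b : Mat d m,
    Tendsto (fun n : ℕ =>
        (n : ℝ)⁻¹ * ∑ i ∈ Finset.Icc m n,
          ‖(ρ (m + (i - m) + m) * tens (tens a (1 : Mat d (i - m))) b).trace
            - (ρ m * a).trace * (ρ m * b).trace‖)
      atTop (nhds 0)

/-- Strong mixing. -/
def QStrongMixing (d : ℕ) (ρ : ∀ m, Mat d m) : Prop :=
  ∀ m, 1 ≤ m → ∀ a b : Mat d m,
    Tendsto (fun i : ℕ =>
        (ρ (m + (i - m) + m) * tens (tens a (1 : Mat d (i - m))) b).trace)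
      atTop (nhds ((ρ m * a).trace * (ρ m * b).trace))

/-- The `m`-fold elementary tensor `A_{j 1} ⊗ ⋯ ⊗ A_{j m}` of Kraus operators. -/
def krausPow {d : ℕ} {J : Type} [Fintype J] (A : J → Matrix (Fin d) (Fin d) ℂ)
    {m : ℕ} (j : Fin m → J) : Mat d m :=
  Matrix.of fun x y => ∏ k, A (j k) (x k) (y k)

/-- The induced map `E^{⊗m}` of a memoryless channel with Kraus operators `A`. -/
def channelPow {d : ℕ} {J : Type} [Fintype J] (A : J → Matrix (Fin d) (Fin d) ℂ)
    (m : ℕ) (σ : Mat d m) : Mat d m :=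
  ∑ j : Fin m → J, krausPow A j * σ * (krausPow A j)ᴴ

/-- A classical source on alphabet `Fin d`: each `p m` (for `m ≥ 1`) is a
probability distribution on words of length `m`. -/
def IsCSource (d : ℕ) (p : ∀ m, (Fin m → Fin d) → ℝ) : Prop :=
  ∀ m, 1 ≤ m → (∀ x, 0 ≤ p m x) ∧ ∑ x, p m x = 1

def CConsistent (d : ℕ) (p : ∀ m, (Fin m → Fin d) → ℝ) : Prop :=
  ∀ m i, 1 ≤ m → 1 ≤ i → ∀ x : Fin m → Fin d,
    p m x = ∑ y : Fin i → Fin d, p (m + i) (Fin.append x y)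

def CStationary (d : ℕ) (p : ∀ m, (Fin m → Fin d) → ℝ) : Prop :=
  ∀ m i, 1 ≤ m → 1 ≤ i → ∀ x : Fin m → Fin d,
    p m x = ∑ y : Fin i → Fin d, p (i + m) (Fin.append y x)

def CErgodic (d : ℕ) (p : ∀ m, (Fin m → Fin d) → ℝ) : Prop :=
  ∀ m, 1 ≤ m → ∀ x y : Fin m → Fin d,
    Tendsto (fun n : ℕ =>
        (n : ℝ)⁻¹ * ∑ i ∈ Finset.Icc m n,
          ∑ z : Fin (i - m) → Fin d, p (m + (i - m) + m) (Fin.append (Fin.append x z) y))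
      atTop (nhds (p m x * p m y))

def CWeakMixing (d : ℕ) (p : ∀ m, (Fin m → Fin d) → ℝ) : Prop :=
  ∀ m, 1 ≤ m → ∀ x y : Fin m → Fin d,
    Tendsto (fun n : ℕ =>
        (n : ℝ)⁻¹ * ∑ i ∈ Finset.Icc m n,
          |(∑ z : Fin (i - m) → Fin d, p (m + (i - m) + m) (Fin.append (Fin.append x z) y))
            - p m x * p m y|)
      atTop (nhds 0)

def CStrongMixing (d : ℕ) (p : ∀ m, (Fin m → Fin d) → ℝ) : Prop :=
  ∀ m, 1 ≤ m → ∀ x y : Fin m → Fin d,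
    Tendsto (fun i : ℕ =>
        ∑ z : Fin (i - m) → Fin d, p (m + (i - m) + m) (Fin.append (Fin.append x z) y))
      atTop (nhds (p m x * p m y))

/-- The classically correlated state `∑_x p(x) · ψ_{x 1}ψ_{x 1}† ⊗ ⋯ ⊗ ψ_{x m}ψ_{x m}†`. -/
def clsState {d : ℕ} (ψ : Fin d → Fin d → ℂ) {m : ℕ} (pm : (Fin m → Fin d) → ℝ) : Mat d m :=
  ∑ x : Fin m → Fin d, (pm x : ℂ) •
    Matrix.of (fun u v => ∏ k, ψ (x k) (u k) * star (ψ (x k) (v k)))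

/-- The probability `⟨u_{x 1} ⊗ ⋯ ⊗ u_{x m}, ρ (u_{x 1} ⊗ ⋯ ⊗ u_{x m})⟩` of
measurement outcome `x` in the product basis built from `u`. -/
def measProb {d m : ℕ} (ρ : Mat d m) (u : Fin d → Fin d → ℂ) (x : Fin m → Fin d) : ℝ :=
  (∑ v : Fin m → Fin d, ∑ w : Fin m → Fin d,
    star (∏ k, u (x k) (v k)) * ρ v w * ∏ k, u (x k) (w k)).re

/-- Von Neumann entropy (base-2) of a Hermitian matrix, via its eigenvalues;
junk value `0` for non-Hermitian input.  The convention `0·log₂ 0 = 0` holds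
automatically since `Real.logb 2 0 = 0`. -/
def vnEntropy {n : Type} [Fintype n] [DecidableEq n] (ρ : Matrix n n ℂ) : ℝ :=
  if h : ρ.IsHermitian then -∑ k, h.eigenvalues k * Real.logb 2 (h.eigenvalues k) else 0

section Aux
variable {d : ℕ} {J : Type} [Fintype J] (A : J → Matrix (Fin d) (Fin d) ℂ)

def dualPow (m : ℕ) (X : Mat d m) : Mat d m :=
  ∑ j : Fin m → J, (krausPow A j)ᴴ * X * krausPow A j

lemma trace_channelPow_mul (m : ℕ) (σ X : Mat d m) :
    (channelPow A m σ * X).trace = (σ * dualPow A m X).trace := by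
  simp only [channelPow, dualPow, Finset.sum_mul, Matrix.mul_sum, Matrix.trace_sum]
  refine Finset.sum_congr rfl fun j _ => ?_
  simp only [Matrix.mul_assoc]
  rw [Matrix.trace_mul_comm]
  simp only [Matrix.mul_assoc]

lemma fun_eq_iff_pieces {α : Type*} {m i : ℕ} (x y : Fin (m + i) → α) :
    x = y ↔ ((fun k => x (Fin.castAdd i k)) = fun k => y (Fin.castAdd i k)) ∧
      ((fun k => x (Fin.natAdd m k)) = fun k => y (Fin.natAdd m k)) := by
  constructor
  · rintro rfl; exact ⟨rfl, rfl⟩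
  · rintro ⟨h1, h2⟩
    rw [← Fin.append_castAdd_natAdd (f := x), ← Fin.append_castAdd_natAdd (f := y), h1, h2]

lemma tens_mul {m i : ℕ} (X X' : Mat d m) (Y Y' : Mat d i) :
    tens X Y * tens X' Y' = tens (X * X') (Y * Y') := by
  ext x y
  simp only [tens, Matrix.mul_apply, Matrix.of_apply]
  rw [← Equiv.sum_comp (Fin.appendEquiv m i), Fintype.sum_prod_type, Finset.sum_mul_sum]
  refine Finset.sum_congr rfl fun z₁ _ => Finset.sum_congr rfl fun z₂ _ => ?_
  have h1 : (fun k => Fin.appendEquiv m i (z₁, z₂) (Fin.castAdd i k)) = z₁ := by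
    funext k; simp [Fin.appendEquiv, Fin.append_left]
  have h2 : (fun k => Fin.appendEquiv m i (z₁, z₂) (Fin.natAdd m k)) = z₂ := by
    funext k; simp [Fin.appendEquiv, Fin.append_right]
  rw [h1, h2]; ring

lemma krausPow_append {m i : ℕ} (j₁ : Fin m → J) (j₂ : Fin i → J) :
    krausPow A (Fin.append j₁ j₂) = tens (krausPow A j₁) (krausPow A j₂) := by
  ext x y
  simp only [krausPow, tens, Matrix.of_apply]
  rw [Fin.prod_univ_add]
  simp [Fin.append_left, Fin.append_right]

lemma tens_conjTranspose {m i : ℕ} (X : Mat d m) (Y : Mat d i) :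
    (tens X Y)ᴴ = tens Xᴴ Yᴴ := by
  ext x y
  simp [tens, Matrix.conjTranspose_apply, star_mul']

lemma tens_sum_sum {ι κ : Type*} [Fintype ι] [Fintype κ] {m i : ℕ}
    (f : ι → Mat d m) (g : κ → Mat d i) :
    tens (∑ a, f a) (∑ b, g b) = ∑ a, ∑ b, tens (f a) (g b) := by
  ext x y
  simp [tens, Matrix.sum_apply, Finset.sum_mul_sum]

lemma dualPow_tens {m i : ℕ} (X : Mat d m) (Y : Mat d i) :
    dualPow A (m + i) (tens X Y) = tens (dualPow A m X) (dualPow A i Y) := by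
  rw [dualPow, ← Equiv.sum_comp (Fin.appendEquiv m i)
    (fun j => (krausPow A j)ᴴ * tens X Y * krausPow A j), Fintype.sum_prod_type,
    dualPow, dualPow, tens_sum_sum]
  refine Finset.sum_congr rfl fun j₁ _ => Finset.sum_congr rfl fun j₂ _ => ?_
  show (krausPow A (Fin.append j₁ j₂))ᴴ * tens X Y * krausPow A (Fin.append j₁ j₂) = _
  rw [krausPow_append, tens_conjTranspose, tens_mul, tens_mul]

lemma dualPow_one (hA : ∑ j, (A j)ᴴ * A j = 1) (i : ℕ) :
    dualPow A i (1 : Mat d i) = 1 := by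
  ext x y
  simp only [dualPow, Matrix.sum_apply, Matrix.mul_one, Matrix.mul_apply,
    Matrix.conjTranspose_apply, krausPow, Matrix.of_apply]
  have step : ∀ (j : Fin i → J) (v : Fin i → Fin d),
      star (∏ k, A (j k) (v k) (x k)) * ∏ k, A (j k) (v k) (y k)
        = ∏ k, star (A (j k) (v k) (x k)) * A (j k) (v k) (y k) := by
    intro j v
    rw [star_prod, ← Finset.prod_mul_distrib]
  simp_rw [step]
  calc (∑ j : Fin i → J, ∑ v : Fin i → Fin d,
          ∏ k, star (A (j k) (v k) (x k)) * A (j k) (v k) (y k))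
      = ∑ p : (Fin i → J) × (Fin i → Fin d),
          ∏ k, star (A (p.1 k) (p.2 k) (x k)) * A (p.1 k) (p.2 k) (y k) := by
        rw [Fintype.sum_prod_type]
    _ = ∑ w : Fin i → J × Fin d, ∏ k, star (A (w k).1 (w k).2 (x k)) * A (w k).1 (w k).2 (y k) :=
        Fintype.sum_equiv (Equiv.arrowProdEquivProdArrow (Fin i) (fun _ => J) (fun _ => Fin d)).symm _ _
          (fun p => by simp [Equiv.arrowProdEquivProdArrow])
    _ = ∏ k, ∑ p : J × Fin d, star (A p.1 p.2 (x k)) * A p.1 p.2 (y k) := by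
        rw [Fintype.prod_sum]
    _ = ∏ k, (1 : Matrix (Fin d) (Fin d) ℂ) (x k) (y k) := by
        refine Finset.prod_congr rfl fun k _ => ?_
        rw [← hA]
        simp [Matrix.sum_apply, Matrix.mul_apply, Fintype.sum_prod_type, Matrix.conjTranspose_apply]
    _ = (1 : Mat d i) x y := by
        simp only [Matrix.one_apply]
        by_cases h : x = y
        · simp [h]
        · rw [if_neg h]
          obtain ⟨k, hk⟩ := Function.ne_iff.mp h
          exact Finset.prod_eq_zero (Finset.mem_univ k) (by simp [hk])

end Aux

/-- a memoryless channel maps a stationary weakly mixing quantum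
source to a weakly mixing one. -/
theorem channel_preserves_weak_mixing
    (d : ℕ) (hd : 2 ≤ d) (J : Type) [Fintype J]
    (A : J → Matrix (Fin d) (Fin d) ℂ) (hA : ∑ j, (A j)ᴴ * A j = 1)
    (ρ : ∀ m, Mat d m) (hρ : IsQSource d ρ) (hstat : QStationary d ρ)
    (hwm : QWeakMixing d ρ) :
    QWeakMixing d (fun m => channelPow A m (ρ m)) := by
  intro m hm a b
  have key := hwm m hm (dualPow A m a) (dualPow A m b)
  refine key.congr fun n => ?_
  congr 1
  refine Finset.sum_congr rfl fun i _ => ?_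
  congr 2
  · rw [trace_channelPow_mul, dualPow_tens, dualPow_tens, dualPow_one A hA]
  · rw [trace_channelPow_mul, trace_channelPow_mul]
end
end

section
/- Let ψ_1,…,ψ_d ∈ ℂ^d be linearly independent unit vectors and let p = (p_m)_{m≥1} be a consistent, stationary, and weakly mixing classical source on the alphabet Fin d. Then the classically correlated quantum source (ρ^{cls}_m)_{m≥1} is weakly mixing. -/
open Matrix Finset Filter Topology
open scoped ComplexOrder

noncomputable section

section AuxWM

variable {d : ℕ} (ψ : Fin d → Fin d → ℂ)

/-- Sum over words of length `m+i` splits as a double sum via `Fin.append`. -/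
lemma sum_append_words {m i : ℕ} {α : Type*} [AddCommMonoid α]
    (f : (Fin (m + i) → Fin d) → α) :
    ∑ w, f w = ∑ x : Fin m → Fin d, ∑ y : Fin i → Fin d, f (Fin.append x y) := by
  have h := Equiv.sum_comp (Fin.appendEquiv (α := Fin d) m i) f
  rw [← h, Fintype.sum_prod_type]
  rfl

/-- The "expectation" of `A` against the elementary tensor labelled by `x`. -/
def Tfun {m : ℕ} (x : Fin m → Fin d) (A : Mat d m) : ℂ :=
  ∑ u : Fin m → Fin d, ∑ v : Fin m → Fin d,
    (∏ k, ψ (x k) (u k) * star (ψ (x k) (v k))) * A v u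

lemma trace_clsState_mul {m : ℕ} (q : (Fin m → Fin d) → ℝ) (A : Mat d m) :
    (clsState ψ q * A).trace = ∑ x, (q x : ℂ) * Tfun ψ x A := by
  unfold clsState Tfun
  rw [Finset.sum_mul, Matrix.trace_sum]
  refine Finset.sum_congr rfl fun x _ => ?_
  rw [Matrix.smul_mul, Matrix.trace_smul, smul_eq_mul]
  congr 1

lemma Tfun_tens {m i : ℕ} (x : Fin m → Fin d) (z : Fin i → Fin d)
    (A : Mat d m) (B : Mat d i) :
    Tfun ψ (Fin.append x z) (tens A B) = Tfun ψ x A * Tfun ψ z B := by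
  unfold Tfun
  rw [sum_append_words]
  simp_rw [sum_append_words (m := m) (i := i) (α := ℂ)]
  rw [Finset.sum_mul_sum]
  refine Finset.sum_congr rfl fun u1 _ => ?_
  refine Finset.sum_congr rfl fun u2 _ => ?_
  rw [Finset.sum_mul_sum]
  refine Finset.sum_congr rfl fun v1 _ => ?_
  refine Finset.sum_congr rfl fun v2 _ => ?_
  have h1 : (∏ k : Fin (m + i),
      ψ (Fin.append x z k) (Fin.append u1 u2 k) * star (ψ (Fin.append x z k) (Fin.append v1 v2 k)))
      = (∏ k : Fin m, ψ (x k) (u1 k) * star (ψ (x k) (v1 k)))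
        * ∏ k : Fin i, ψ (z k) (u2 k) * star (ψ (z k) (v2 k)) := by
    rw [Fin.prod_univ_add]
    simp [Fin.append_left, Fin.append_right]
  have h2 : tens A B (Fin.append v1 v2) (Fin.append u1 u2) = A v1 u1 * B v2 u2 := by
    show A _ _ * B _ _ = _
    congr 1 <;> congr 1 <;> funext k <;> simp [Fin.append_left, Fin.append_right]
  rw [h1, h2]; ring

lemma Tfun_one (hunit : ∀ j, ∑ k, star (ψ j k) * ψ j k = 1) {i : ℕ}
    (z : Fin i → Fin d) : Tfun ψ z (1 : Mat d i) = 1 := by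
  unfold Tfun
  have key : ∀ u : Fin i → Fin d,
      ∑ v : Fin i → Fin d, (∏ k, ψ (z k) (u k) * star (ψ (z k) (v k))) * (1 : Mat d i) v u
        = ∏ k, ψ (z k) (u k) * star (ψ (z k) (u k)) := by
    intro u
    rw [Finset.sum_eq_single u]
    · simp
    · intro v _ hv; simp [Matrix.one_apply, hv]
    · simp
  simp_rw [key]
  have hps := Finset.prod_univ_sum (fun _ : Fin i => (Finset.univ : Finset (Fin d)))
    (fun k j => ψ (z k) j * star (ψ (z k) j))
  rw [Fintype.piFinset_univ] at hps
  rw [← hps]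
  have h1 : ∀ k : Fin i, (∑ j, ψ (z k) j * star (ψ (z k) j)) = 1 := by
    intro k; rw [← hunit (z k)]; exact Finset.sum_congr rfl fun j _ => mul_comm _ _
  exact Finset.prod_eq_one fun k _ => h1 k

lemma trace_cls_main {m j : ℕ} (hunit : ∀ j, ∑ k, star (ψ j k) * ψ j k = 1)
    (q : (Fin (m + j + m) → Fin d) → ℝ) (a b : Mat d m) :
    (clsState ψ q * tens (tens a (1 : Mat d j)) b).trace
      = ∑ x : Fin m → Fin d, ∑ y : Fin m → Fin d,
          ((∑ z : Fin j → Fin d, q (Fin.append (Fin.append x z) y) : ℝ) : ℂ)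
            * (Tfun ψ x a * Tfun ψ y b) := by
  rw [trace_clsState_mul]
  rw [sum_append_words (m := m + j) (i := m)
    (f := fun w => (q w : ℂ) * Tfun ψ w (tens (tens a (1 : Mat d j)) b))]
  simp_rw [Tfun_tens]
  rw [sum_append_words (m := m) (i := j)
    (f := fun s => ∑ y : Fin m → Fin d,
      (q (Fin.append s y) : ℂ) * (Tfun ψ s (tens a (1 : Mat d j)) * Tfun ψ y b))]
  simp_rw [Tfun_tens, Tfun_one ψ hunit, mul_one]
  refine Finset.sum_congr rfl fun x _ => ?_
  rw [Finset.sum_comm]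
  refine Finset.sum_congr rfl fun y _ => ?_
  push_cast
  rw [Finset.sum_mul]

end AuxWM

/-- a classically correlated quantum source built from a weakly
mixing classical source is weakly mixing. -/
theorem cls_source_weak_mixing
    (d : ℕ) (hd : 2 ≤ d) (ψ : Fin d → Fin d → ℂ)
    (hind : LinearIndependent ℂ ψ)
    (hunit : ∀ i, ∑ k, star (ψ i k) * ψ i k = 1)
    (p : ∀ m, (Fin m → Fin d) → ℝ) (hp : IsCSource d p)
    (hc : CConsistent d p) (hs : CStationary d p) (hwm : CWeakMixing d p) :
    QWeakMixing d (fun m => clsState ψ (p m)) := by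
  intro m hm a b
  -- abbreviations
  set Ta : (Fin m → Fin d) → ℂ := fun x => Tfun ψ x a with hTa
  set Tb : (Fin m → Fin d) → ℂ := fun y => Tfun ψ y b with hTb
  -- pointwise bound on the deviation
  have key : ∀ i : ℕ,
      ‖((clsState ψ (p (m + (i - m) + m)) : Mat d (m + (i-m) + m))
          * tens (tens a (1 : Mat d (i - m))) b).trace
        - ((clsState ψ (p m) : Mat d m) * a).trace * ((clsState ψ (p m) : Mat d m) * b).trace‖
      ≤ ∑ x : Fin m → Fin d, ∑ y : Fin m → Fin d,
          |(∑ z : Fin (i - m) → Fin d, p (m + (i - m) + m) (Fin.append (Fin.append x z) y))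
            - p m x * p m y| * (‖Ta x‖ * ‖Tb y‖) := by
    intro i
    rw [trace_cls_main ψ hunit, trace_clsState_mul, trace_clsState_mul]
    have hexp : (∑ x, (p m x : ℂ) * Tfun ψ x a) * (∑ y, (p m y : ℂ) * Tfun ψ y b)
        = ∑ x : Fin m → Fin d, ∑ y : Fin m → Fin d,
            ((p m x * p m y : ℝ) : ℂ) * (Ta x * Tb y) := by
      rw [Finset.sum_mul_sum]
      refine Finset.sum_congr rfl fun x _ => Finset.sum_congr rfl fun y _ => ?_
      push_cast; ring
    rw [hexp, ← Finset.sum_sub_distrib]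
    simp_rw [← Finset.sum_sub_distrib, hTa, hTb, ← sub_mul]
    refine le_trans (norm_sum_le _ _) (Finset.sum_le_sum fun x _ => ?_)
    refine le_trans (norm_sum_le _ _) (Finset.sum_le_sum fun y _ => ?_)
    rw [norm_mul, norm_mul, ← Complex.ofReal_sub, Complex.norm_real, Real.norm_eq_abs]
  -- squeeze
  have habs : ∀ n : ℕ, 0 ≤ (n : ℝ)⁻¹ * ∑ i ∈ Finset.Icc m n,
      ‖((clsState ψ (p (m + (i - m) + m)) : Mat d (m + (i-m) + m))
          * tens (tens a (1 : Mat d (i - m))) b).trace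
        - ((clsState ψ (p m) : Mat d m) * a).trace * ((clsState ψ (p m) : Mat d m) * b).trace‖ :=
    fun n => mul_nonneg (by positivity) (Finset.sum_nonneg fun i _ => norm_nonneg _)
  have hle : ∀ n : ℕ, (n : ℝ)⁻¹ * ∑ i ∈ Finset.Icc m n,
      ‖((clsState ψ (p (m + (i - m) + m)) : Mat d (m + (i-m) + m))
          * tens (tens a (1 : Mat d (i - m))) b).trace
        - ((clsState ψ (p m) : Mat d m) * a).trace * ((clsState ψ (p m) : Mat d m) * b).trace‖
      ≤ ∑ x : Fin m → Fin d, ∑ y : Fin m → Fin d,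
          (‖Ta x‖ * ‖Tb y‖) *
            ((n : ℝ)⁻¹ * ∑ i ∈ Finset.Icc m n,
              |(∑ z : Fin (i - m) → Fin d,
                  p (m + (i - m) + m) (Fin.append (Fin.append x z) y)) - p m x * p m y|) := by
    intro n
    have h1 : (n : ℝ)⁻¹ * ∑ i ∈ Finset.Icc m n,
        ‖((clsState ψ (p (m + (i - m) + m)) : Mat d (m + (i-m) + m))
            * tens (tens a (1 : Mat d (i - m))) b).trace
          - ((clsState ψ (p m) : Mat d m) * a).trace * ((clsState ψ (p m) : Mat d m) * b).trace‖
        ≤ (n : ℝ)⁻¹ * ∑ i ∈ Finset.Icc m n, ∑ x : Fin m → Fin d, ∑ y : Fin m → Fin d,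
            |(∑ z : Fin (i - m) → Fin d,
                p (m + (i - m) + m) (Fin.append (Fin.append x z) y)) - p m x * p m y|
              * (‖Ta x‖ * ‖Tb y‖) :=
      mul_le_mul_of_nonneg_left (Finset.sum_le_sum fun i _ => key i) (by positivity)
    refine h1.trans (le_of_eq ?_)
    rw [Finset.sum_comm]
    rw [Finset.mul_sum]
    refine Finset.sum_congr rfl fun x _ => ?_
    rw [Finset.sum_comm, Finset.mul_sum]
    refine Finset.sum_congr rfl fun y _ => ?_
    rw [← Finset.sum_mul]
    ring
  have hlim : Tendsto (fun n : ℕ => ∑ x : Fin m → Fin d, ∑ y : Fin m → Fin d,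
      (‖Ta x‖ * ‖Tb y‖) *
        ((n : ℝ)⁻¹ * ∑ i ∈ Finset.Icc m n,
          |(∑ z : Fin (i - m) → Fin d,
              p (m + (i - m) + m) (Fin.append (Fin.append x z) y)) - p m x * p m y|))
      atTop (nhds 0) := by
    have : Tendsto (fun n : ℕ => ∑ x : Fin m → Fin d, ∑ y : Fin m → Fin d,
        (‖Ta x‖ * ‖Tb y‖) *
          ((n : ℝ)⁻¹ * ∑ i ∈ Finset.Icc m n,
            |(∑ z : Fin (i - m) → Fin d,
                p (m + (i - m) + m) (Fin.append (Fin.append x z) y)) - p m x * p m y|))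
        atTop (nhds (∑ x : Fin m → Fin d, ∑ y : Fin m → Fin d, (0 : ℝ))) := by
      refine tendsto_finset_sum _ fun x _ => tendsto_finset_sum _ fun y _ => ?_
      simpa using ((hwm m hm x y).const_mul (‖Ta x‖ * ‖Tb y‖))
    simpa using this
  exact squeeze_zero habs hle hlim
end
end
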